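/- arXiv:2307.06700 — 6 statements merged into one kernel-verified Lean document; each statement's English description precedes it below -/
import Mathlib

section
/- For every digraph D, the dichromatic number satisfies χ⃗(D) ≤ δ*_c(D) + 1, where δ*_c(D) is the cycle-degeneracy of D. -/
variable {V : Type*}

/-- A directed cycle in the digraph with arc relation `A`: a nonempty list of
pairwise distinct vertices forming a closed directed walk. -/
def IsDicycle (A : V → V → Prop) (l : List V) : Prop :=
  l ≠ [] ∧ l.Nodup ∧ l.Chain' A ∧ ∀ x ∈ l.getLast?, ∀ y ∈ l.head?, A x y

/-- The digraph with arc relation `A` has no directed cycle. -/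
def Acyclic (A : V → V → Prop) : Prop := ¬ ∃ l : List V, IsDicycle A l

/-- `S` intersects every directed cycle of `A` containing `v`. -/
def HitsCyclesThrough (A : V → V → Prop) (v : V) (S : Finset V) : Prop :=
  ∀ l : List V, IsDicycle A l → v ∈ l → ∃ u ∈ l, u ∈ S

/-- The cycle-degree of `v`: the minimum size of a set `S ⊆ V \ {v}`
intersecting every directed cycle containing `v`. -/
noncomputable def cycleDegree (A : V → V → Prop) (v : V) : ℕ :=
  sInf { n | ∃ S : Finset V, S.card = n ∧ v ∉ S ∧ HitsCyclesThrough A v S }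

/-- `(U, E)` is a (nonempty) subdigraph of the digraph on `V` with arcs `A`. -/
def IsSubdigraph (A : V → V → Prop) (U : Finset V) (E : Finset (V × V)) : Prop :=
  U.Nonempty ∧ ∀ p ∈ E, A p.1 p.2 ∧ p.1 ∈ U ∧ p.2 ∈ U

/-- The arc relation of a finite arc set. -/
def arcRel (E : Finset (V × V)) : V → V → Prop := fun x y => (x, y) ∈ E

/-- The cycle-degeneracy of the digraph `A`: the maximum, over all subdigraphs,
of the minimum cycle-degree. -/
noncomputable def cycleDegeneracy (A : V → V → Prop) : ℕ :=
  sSup { m | ∃ (U : Finset V) (E : Finset (V × V)),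
    IsSubdigraph A U E ∧ ∀ v ∈ U, m ≤ cycleDegree (arcRel E) v }

/-- A dicolouring: every colour class induces an acyclic subdigraph. -/
def IsDicolouring {C : Type*} (A : V → V → Prop) (φ : V → C) : Prop :=
  ∀ c : C, Acyclic fun x y => A x y ∧ φ x = c ∧ φ y = c

/-- The dichromatic number: least `k` admitting a `k`-dicolouring. -/
noncomputable def dichromaticNumber (A : V → V → Prop) : ℕ :=
  sInf { k | ∃ φ : V → Fin k, IsDicolouring A φ }

section Aux
variable {V : Type*}

theorem chain'_mem_imp {R S : V → V → Prop} :
    ∀ l : List V, l.Chain' R → (∀ x ∈ l, ∀ y ∈ l, R x y → S x y) → l.Chain' S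
  | [], _, _ => List.isChain_nil
  | [a], _, _ => List.isChain_singleton a
  | a :: b :: t, h, him => by
      simp only [List.Chain', List.isChain_cons_cons] at h ⊢
      refine ⟨him a (by simp) b (by simp) h.1, chain'_mem_imp (b :: t) h.2 ?_⟩
      exact fun x hx y hy hr =>
        him x (List.mem_cons_of_mem _ hx) y (List.mem_cons_of_mem _ hy) hr

theorem isDicycle_mem_imp {R S : V → V → Prop} {l : List V}
    (h : IsDicycle R l) (him : ∀ x ∈ l, ∀ y ∈ l, R x y → S x y) : IsDicycle S l := by
  obtain ⟨hne, hnd, hch, hwrap⟩ := h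
  refine ⟨hne, hnd, chain'_mem_imp l hch him, fun x hx y hy => ?_⟩
  exact him x (List.mem_of_mem_getLast? hx) y (List.mem_of_mem_head? hy) (hwrap x hx y hy)

theorem acyclic_mono {R S : V → V → Prop} (h : Acyclic R)
    (him : ∀ x y, S x y → R x y) : Acyclic S := by
  rintro ⟨l, hl⟩
  exact h ⟨l, isDicycle_mem_imp hl (fun x _ y _ => him x y)⟩

theorem chain'_source {R : V → V → Prop} :
    ∀ l : List V, l.Chain' R → ∀ x ∈ l, (∃ y ∈ l, R x y) ∨ x ∈ l.getLast?
  | [], _, x, hx => absurd hx List.not_mem_nil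
  | [a], _, x, hx => by
      right; simp only [List.mem_singleton] at hx; simp [hx]
  | a :: b :: t, h, x, hx => by
      simp only [List.Chain', List.isChain_cons_cons] at h
      rcases List.mem_cons.1 hx with rfl | hx'
      · exact Or.inl ⟨b, by simp, h.1⟩
      · rcases chain'_source (b :: t) h.2 x hx' with ⟨y, hy, hr⟩ | hl
        · exact Or.inl ⟨y, List.mem_cons_of_mem _ hy, hr⟩
        · right; rwa [List.getLast?_cons_cons]

theorem isDicycle_source {R : V → V → Prop} {l : List V}
    (h : IsDicycle R l) : ∀ x ∈ l, ∃ y ∈ l, R x y := by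
  obtain ⟨hne, _, hch, hwrap⟩ := h
  intro x hx
  rcases chain'_source l hch x hx with hy | hlast
  · exact hy
  · obtain ⟨a, t, rfl⟩ := List.exists_cons_of_ne_nil hne
    exact ⟨a, by simp, hwrap x hlast a rfl⟩

theorem cycleDegreeSet_mem_of_noloop [Fintype V] [DecidableEq V]
    {R : V → V → Prop} (v : V) (hl : ¬ R v v) :
    (Finset.univ.erase v).card ∈
      {n | ∃ S : Finset V, S.card = n ∧ v ∉ S ∧ HitsCyclesThrough R v S} := by
  refine ⟨Finset.univ.erase v, rfl, by simp, ?_⟩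
  intro l hcyc hv
  obtain ⟨a, t, rfl⟩ := List.exists_cons_of_ne_nil hcyc.1
  cases t with
  | nil =>
      have ha : v = a := by simpa using hv
      subst ha
      exact absurd (hcyc.2.2.2 v rfl v rfl) hl
  | cons b t =>
      by_cases hav : a = v
      · refine ⟨b, by simp, Finset.mem_erase.2 ⟨fun hb => ?_, Finset.mem_univ _⟩⟩
        exact (List.nodup_cons.1 hcyc.2.1).1 (by simp [hav, hb])
      · exact ⟨a, by simp, Finset.mem_erase.2 ⟨hav, Finset.mem_univ _⟩⟩

theorem degSet_bddAbove [Fintype V] [DecidableEq V] {A : V → V → Prop}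
    (hloop : ∀ v, ¬ A v v) :
    BddAbove { m | ∃ (U : Finset V) (E : Finset (V × V)),
      IsSubdigraph A U E ∧ ∀ v ∈ U, m ≤ cycleDegree (arcRel E) v } := by
  refine ⟨Fintype.card V, ?_⟩
  rintro m ⟨U, E, ⟨hUne, hE⟩, hdeg⟩
  obtain ⟨v, hv⟩ := hUne
  have hnl : ¬ arcRel E v v := fun h => hloop v (hE _ h).1
  calc m ≤ cycleDegree (arcRel E) v := hdeg v hv
    _ ≤ (Finset.univ.erase v).card := Nat.sInf_le (cycleDegreeSet_mem_of_noloop v hnl)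
    _ ≤ Fintype.card V := by
        rw [Finset.card_erase_of_mem (Finset.mem_univ v)]
        exact Nat.sub_le _ _

theorem main_colour [Fintype V] [DecidableEq V] (A : V → V → Prop)
    (hloop : ∀ v, ¬ A v v) (U : Finset V) :
    ∃ φ : V → Fin (cycleDegeneracy A + 1),
      IsDicolouring (fun x y => A x y ∧ x ∈ U ∧ y ∈ U) φ := by
  classical
  set δ := cycleDegeneracy A with hδ
  induction U using Finset.strongInductionOn with
  | _ U ih =>
  rcases U.eq_empty_or_nonempty with rfl | hUne
  · refine ⟨fun _ => 0, fun c => ?_⟩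
    rintro ⟨l, hne, _, _, hwrap⟩
    obtain ⟨a, t, rfl⟩ := List.exists_cons_of_ne_nil hne
    obtain ⟨x, hx⟩ := Option.isSome_iff_exists.1
      (List.getLast?_isSome.2 (List.cons_ne_nil a t))
    exact absurd (hwrap x hx a rfl).1.2.1 (by simp)
  · set E : Finset (V × V) := (U ×ˢ U).filter (fun p => A p.1 p.2) with hE
    have hEmem : ∀ {x y : V}, (x, y) ∈ E ↔ A x y ∧ x ∈ U ∧ y ∈ U := by
      intro x y
      simp [hE, Finset.mem_filter, Finset.mem_product, and_comm, and_assoc, and_left_comm]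
    have hsub : IsSubdigraph A U E := by
      refine ⟨hUne, fun p hp => ?_⟩
      rw [show p = (p.1, p.2) from rfl, hEmem] at hp
      exact hp
    have hnl : ∀ v : V, ¬ arcRel E v v := fun v h => hloop v (hEmem.1 h).1
    have hdsetne : ∀ v : V,
        {n | ∃ S : Finset V, S.card = n ∧ v ∉ S ∧ HitsCyclesThrough (arcRel E) v S}.Nonempty :=
      fun v => ⟨_, cycleDegreeSet_mem_of_noloop v (hnl v)⟩
    -- find vertex of small cycle-degree
    have hex : ∃ v ∈ U, cycleDegree (arcRel E) v ≤ δ := by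
      by_contra h
      push_neg at h
      have hmem : δ + 1 ∈ { m | ∃ (U' : Finset V) (E' : Finset (V × V)),
          IsSubdigraph A U' E' ∧ ∀ v ∈ U', m ≤ cycleDegree (arcRel E') v } :=
        ⟨U, E, hsub, fun v hv => h v hv⟩
      have h2 : δ + 1 ≤ cycleDegeneracy A := le_csSup (degSet_bddAbove hloop) hmem
      rw [← hδ] at h2
      omega
    obtain ⟨v, hv, hvdeg⟩ := hex
    obtain ⟨S, hScard, hvS, hhits⟩ := Nat.sInf_mem (hdsetne v)
    have hScard' : S.card ≤ δ := hScard.le.trans hvdeg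
    obtain ⟨φ', hφ'⟩ := ih (U.erase v) (Finset.erase_ssubset hv)
    -- choose a colour not used on S
    have hc : ∃ c : Fin (δ + 1), c ∉ S.image φ' := by
      by_contra h
      push_neg at h
      have : (Finset.univ : Finset (Fin (δ + 1))) ⊆ S.image φ' :=
        fun c _ => h c
      have := Finset.card_le_card this
      simp only [Finset.card_univ, Fintype.card_fin] at this
      have := (Finset.card_image_le (s := S) (f := φ')).trans hScard'
      omega
    obtain ⟨c, hc⟩ := hc
    refine ⟨Function.update φ' v c, fun c' => ?_⟩
    rintro ⟨l, hl⟩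
    set φ : V → Fin (δ + 1) := Function.update φ' v c with hφ
    have hlU : ∀ x ∈ l, x ∈ U ∧ φ x = c' := by
      intro x hx
      obtain ⟨y, _, hr⟩ := isDicycle_source hl x hx
      exact ⟨hr.1.2.1, hr.2.1⟩
    by_cases hvl : v ∈ l
    · -- the hitting set S meets l, contradiction with choice of c
      have hcycE : IsDicycle (arcRel E) l := by
        refine isDicycle_mem_imp hl ?_
        intro x _ y _ hr
        exact hEmem.2 ⟨hr.1.1, hr.1.2.1, hr.1.2.2⟩
      obtain ⟨u, hul, huS⟩ := hhits l hcycE hvl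
      have huv : u ≠ v := fun h => hvS (h ▸ huS)
      have hφu : φ u = c' := (hlU u hul).2
      have hφv : φ v = c' := (hlU v hvl).2
      have hvc : φ v = c := Function.update_self _ _ _
      have : φ' u = c := by
        rw [← Function.update_of_ne huv c φ', ← hφ, hφu, ← hφv, hvc]
      exact hc (Finset.mem_image.2 ⟨u, huS, this⟩)
    · -- l avoids v: contradicts colouring of U.erase v
      refine hφ' c' ⟨l, isDicycle_mem_imp hl ?_⟩
      intro x hx y hy hr
      have hxv : x ≠ v := fun h => hvl (h ▸ hx)
      have hyv : y ≠ v := fun h => hvl (h ▸ hy)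
      have hx' : φ x = φ' x := Function.update_of_ne hxv c φ'
      have hy' : φ y = φ' y := Function.update_of_ne hyv c φ'
      exact ⟨⟨hr.1.1, Finset.mem_erase.2 ⟨hxv, hr.1.2.1⟩, Finset.mem_erase.2 ⟨hyv, hr.1.2.2⟩⟩,
        hx' ▸ hr.2.1, hy' ▸ hr.2.2⟩

end Aux

theorem stmt1 [Fintype V] [DecidableEq V] (A : V → V → Prop) :
    dichromaticNumber A ≤ cycleDegeneracy A + 1 := by
  by_cases hloop : ∃ v, A v v
  · obtain ⟨v, hv⟩ := hloop
    have hempty : { k | ∃ φ : V → Fin k, IsDicolouring A φ } = ∅ := by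
      ext k
      simp only [Set.mem_setOf_eq, Set.mem_empty_iff_false, iff_false]
      rintro ⟨φ, hφ⟩
      refine hφ (φ v) ⟨[v], List.cons_ne_nil _ _, List.nodup_singleton v, List.isChain_singleton v, ?_⟩
      intro x hx y hy
      have hx' : v = x := by simpa using hx
      have hy' : v = y := by simpa using hy
      subst hx'; subst hy'
      exact ⟨hv, rfl, rfl⟩
    rw [dichromaticNumber, hempty, Nat.sInf_empty]
    omega
  · push_neg at hloop
    obtain ⟨φ, hφ⟩ := main_colour A hloop Finset.univ
    have : IsDicolouring A φ := by
      intro c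
      refine acyclic_mono (hφ c) ?_
      intro x y h
      exact ⟨⟨h.1, Finset.mem_univ x, Finset.mem_univ y⟩, h.2⟩
    exact Nat.sInf_le ⟨φ, this⟩
end

section
/- For every digraph D, the directed treewidth of D is at least the cycle-degeneracy of D: dtw(D) ≥ δ*_c(D). -/
variable {V : Type*}

/-- `t''` is a descendant of `t'` w.r.t. the parent function `par`. -/
def Descend {n : ℕ} (par : Fin n → Fin n) (t'' t' : Fin n) : Prop :=
  Relation.ReflTransGen (fun a b => par a = b) t'' t'

/-- `v` lies in some part `W t''` for `t''` in the subtree rooted at `t'`. -/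
def BelowW {n : ℕ} (par : Fin n → Fin n) (W : Fin n → Finset V) (t' : Fin n)
    (v : V) : Prop :=
  ∃ t'', Descend par t'' t' ∧ v ∈ W t''

/-- A directed tree-decomposition of the digraph `A`: an out-arborescence given
by a root `r` and parent function `par` on `Fin n`, a partition `W` of the
vertices into nonempty parts, and guard sets `X` indexed by the (child endpoint
of the) arcs of the arborescence. -/
def IsDirTreeDecomp (A : V → V → Prop) {n : ℕ} (r : Fin n) (par : Fin n → Fin n)
    (W X : Fin n → Finset V) : Prop :=
  par r = r ∧ (∀ t, Descend par t r) ∧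
  (∀ t, (W t).Nonempty) ∧ (∀ v : V, ∃! t, v ∈ W t) ∧ X r = ∅ ∧
  ∀ t' : Fin n, t' ≠ r →
    (∀ v ∈ X t', ¬ BelowW par W t' v) ∧
    (∀ l : List V, l.Chain' A →
      (∀ x ∈ l.head?, BelowW par W t' x) →
      (∀ x ∈ l.getLast?, BelowW par W t' x) →
      (∃ x ∈ l.tail.dropLast, ¬ BelowW par W t' x) →
      ∃ x ∈ l, x ∈ X t')

/-- The bag `H_t = W_t ∪ ⋃_{e ∋ t} X_e` of a directed tree-decomposition. -/
def dtdBag [DecidableEq V] {n : ℕ} (r : Fin n) (par : Fin n → Fin n)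
    (W X : Fin n → Finset V) (t : Fin n) : Finset V :=
  W t ∪ X t ∪ (Finset.univ.filter fun t'' => par t'' = t ∧ t'' ≠ r).biUnion X

/-- The width of a directed tree-decomposition. -/
def dtdWidth [DecidableEq V] {n : ℕ} (r : Fin n) (par : Fin n → Fin n)
    (W X : Fin n → Finset V) : ℕ :=
  (Finset.univ.sup fun t => (dtdBag r par W X t).card) - 1

/-- The directed treewidth of the digraph `A`. -/
noncomputable def dirTreewidth [DecidableEq V] (A : V → V → Prop) : ℕ :=
  sInf { w | ∃ (n : ℕ) (r : Fin n) (par : Fin n → Fin n) (W X : Fin n → Finset V),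
    IsDirTreeDecomp A r par W X ∧ dtdWidth r par W X = w }

section Helpers

variable {n : ℕ} {par : Fin n → Fin n} {r : Fin n}

lemma descend_iff {a b : Fin n} : Descend par a b ↔ ∃ k, par^[k] a = b := by
  constructor
  · intro h
    induction h with
    | refl => exact ⟨0, rfl⟩
    | tail h step ih =>
      obtain ⟨k, hk⟩ := ih
      exact ⟨k + 1, by rw [Function.iterate_succ_apply', hk, step]⟩
  · rintro ⟨k, hk⟩
    induction k generalizing a with
    | zero => exact hk ▸ Relation.ReflTransGen.refl
    | succ k ih =>
      rw [Function.iterate_succ_apply] at hk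
      exact Relation.ReflTransGen.head rfl (ih hk)

lemma descend_root_eq (hr : par r = r) {t : Fin n} (h : Descend par r t) : t = r := by
  induction h with
  | refl => rfl
  | tail h step ih => rw [← step, ih, hr]

noncomputable def depthTo (par : Fin n → Fin n) (r t : Fin n) : ℕ :=
  sInf {k | par^[k] t = r}

lemma depthTo_spec {t : Fin n} (h : Descend par t r) : par^[depthTo par r t] t = r :=
  Nat.sInf_mem (descend_iff.1 h)

lemma depthTo_par_lt (ht : Descend par t r) (hne : t ≠ r) :
    depthTo par r (par t) < depthTo par r t := by
  have hspec := depthTo_spec ht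
  have hpos : depthTo par r t ≠ 0 := by
    intro h0; rw [h0] at hspec; exact hne hspec
  obtain ⟨m, hm⟩ := Nat.exists_eq_succ_of_ne_zero hpos
  rw [hm, Function.iterate_succ_apply] at hspec
  have : depthTo par r (par t) ≤ m := Nat.sInf_le hspec
  omega

lemma depthTo_le_of_descend (hr : par r = r) (hall : ∀ t, Descend par t r)
    {a b : Fin n} (h : Descend par a b) : depthTo par r b ≤ depthTo par r a := by
  induction h using Relation.ReflTransGen.head_induction_on with
  | refl => exact le_refl _
  | @head a' c step h ih =>
    by_cases ha : a' = r
    · have hc : c = r := by rw [← step, ha, hr]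
      have hb : b = r := descend_root_eq hr (hc ▸ h)
      rw [ha, hb]
    · subst step
      exact le_trans ih (le_of_lt (depthTo_par_lt (hall a') ha))

lemma depthTo_lt_of_descend (hr : par r = r) (hall : ∀ t, Descend par t r)
    {a b : Fin n} (h : Descend par a b) (hne : a ≠ b) :
    depthTo par r b < depthTo par r a := by
  rcases Relation.ReflTransGen.cases_head h with heq | ⟨c, step, h'⟩
  · exact absurd heq hne
  · have ha : a ≠ r := by
      intro hra; subst hra
      exact hne (descend_root_eq hr h).symm
    subst step
    exact lt_of_le_of_lt (depthTo_le_of_descend hr hall h') (depthTo_par_lt (hall a) ha)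

end Helpers

-- membership of cycle vertices in U
lemma cycle_mem_U {A : V → V → Prop} {U : Finset V} {E : Finset (V × V)}
    (hsub : IsSubdigraph A U E) {l : List V} (hcyc : IsDicycle (arcRel E) l) :
    ∀ x ∈ l, x ∈ U := by
  obtain ⟨hne, hnd, hch, hcl⟩ := hcyc
  intro x hx
  obtain ⟨⟨i, hi⟩, rfl⟩ := List.mem_iff_get.1 hx
  by_cases h : i < l.length - 1
  · have harc := List.isChain_iff_getElem.1 hch i (by omega)
    exact (hsub.2 _ harc).2.1
  · have hieq : i = l.length - 1 := by omega
    have hx' : l.get ⟨i, hi⟩ = l.getLast hne := by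
      rw [List.getLast_eq_getElem]; simp [hieq]
    have harc := hcl (l.getLast hne) (List.getLast?_eq_getLast hne ▸ rfl)
      (l.head hne) (List.head?_eq_head hne ▸ rfl)
    rw [hx']
    exact (hsub.2 _ harc).2.1

lemma key_lemma [Fintype V] [DecidableEq V] {A : V → V → Prop} {U : Finset V}
    {E : Finset (V × V)} (hsub : IsSubdigraph A U E) {n : ℕ} {r : Fin n}
    {par : Fin n → Fin n} {W X : Fin n → Finset V}
    (hdtd : IsDirTreeDecomp A r par W X) :
    ∃ v ∈ U, cycleDegree (arcRel E) v ≤ dtdWidth r par W X := by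
  obtain ⟨hr, hall, hWne, huniq, hXr, hguard⟩ := hdtd
  by_cases hloop : ∃ u ∈ U, (u, u) ∈ E
  · obtain ⟨u, huU, huE⟩ := hloop
    refine ⟨u, huU, ?_⟩
    have hcyc : IsDicycle (arcRel E) [u] := by
      refine ⟨List.cons_ne_nil _ _, List.nodup_singleton u, List.isChain_singleton u, ?_⟩
      intro x hx y hy
      simp only [List.getLast?_singleton, Option.mem_some_iff] at hx
      simp only [List.head?_cons, Option.mem_some_iff] at hy
      subst hx; subst hy; exact huE
    have hempty : { m | ∃ S : Finset V, S.card = m ∧ u ∉ S ∧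
        HitsCyclesThrough (arcRel E) u S } = ∅ := by
      ext m
      simp only [Set.mem_setOf_eq, Set.mem_empty_iff_false, iff_false]
      rintro ⟨S, -, huS, hhit⟩
      obtain ⟨x, hx, hxS⟩ := hhit [u] hcyc (List.mem_singleton_self u)
      simp only [List.mem_singleton] at hx
      exact huS (hx ▸ hxS)
    unfold cycleDegree
    rw [hempty]
    simp
  -- no self-loops in E on U
  push_neg at hloop
  -- pick t of maximal depth with U ∩ W t nonempty
  have hTne : (Finset.univ.filter fun t => (U ∩ W t).Nonempty).Nonempty := by
    obtain ⟨u0, hu0⟩ := hsub.1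
    obtain ⟨t0, ht0, -⟩ := huniq u0
    exact ⟨t0, Finset.mem_filter.2 ⟨Finset.mem_univ _, ⟨u0, Finset.mem_inter.2 ⟨hu0, ht0⟩⟩⟩⟩
  obtain ⟨t, htT, htmax⟩ := Finset.exists_max_image _ (depthTo par r) hTne
  obtain ⟨v, hv⟩ := (Finset.mem_filter.1 htT).2
  rw [Finset.mem_inter] at hv
  obtain ⟨hvU, hvW⟩ := hv
  -- everything of U below t is in W t
  have hBW : ∀ u ∈ U, BelowW par W t u → u ∈ W t := by
    rintro u huU ⟨t₂, hd, hu⟩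
    by_cases h2 : t₂ = t
    · exact h2 ▸ hu
    · exfalso
      have hlt := depthTo_lt_of_descend hr hall hd h2
      have ht₂T : t₂ ∈ Finset.univ.filter fun t => (U ∩ W t).Nonempty :=
        Finset.mem_filter.2 ⟨Finset.mem_univ _, ⟨u, Finset.mem_inter.2 ⟨huU, hu⟩⟩⟩
      exact absurd (htmax t₂ ht₂T) (by omega)
  have hvBelow : BelowW par W t v := ⟨t, Relation.ReflTransGen.refl, hvW⟩
  refine ⟨v, hvU, ?_⟩
  set Bag := dtdBag r par W X t with hBag
  have hvBag : v ∈ Bag := by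
    simp only [hBag, dtdBag, Finset.mem_union]
    exact Or.inl (Or.inl hvW)
  have hXsub : X t ⊆ Bag := by
    intro x hx
    simp only [hBag, dtdBag, Finset.mem_union]
    exact Or.inl (Or.inr hx)
  have hWsub : W t ⊆ Bag := by
    intro x hx
    simp only [hBag, dtdBag, Finset.mem_union]
    exact Or.inl (Or.inl hx)
  have hhit : HitsCyclesThrough (arcRel E) v (Bag.erase v) := by
    intro l hcyc hvl
    have hlU : ∀ x ∈ l, x ∈ U := cycle_mem_U hsub hcyc
    obtain ⟨hne, hnd, hch, hcl⟩ := hcyc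
    by_cases hallb : ∀ x ∈ l, BelowW par W t x
    · -- all of l is in W t; find a vertex distinct from v
      have hlW : ∀ x ∈ l, x ∈ W t := fun x hx => hBW x (hlU x hx) (hallb x hx)
      have : ∃ u ∈ l, u ≠ v := by
        match l, hne with
        | [x], _ =>
          exfalso
          simp only [List.mem_singleton] at hvl
          subst hvl
          have := hcl v (by simp) v (by simp)
          exact hloop v hvU this
        | x :: y :: l', _ =>
          by_cases hxv : x = v
          · refine ⟨y, by simp, ?_⟩
            subst hxv
            intro hyv
            exact (List.nodup_cons.1 hnd).1 (hyv ▸ List.mem_cons_self)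
          · exact ⟨x, by simp, hxv⟩
      obtain ⟨u, hul, huv⟩ := this
      exact ⟨u, hul, Finset.mem_erase.2 ⟨huv, hWsub (hlW u hul)⟩⟩
    · push_neg at hallb
      obtain ⟨x, hxl, hxnb⟩ := hallb
      have htr : t ≠ r := by
        intro h; subst h
        obtain ⟨tx, htx, -⟩ := huniq x
        exact hxnb ⟨tx, hall tx, htx⟩
      obtain ⟨l1, l2, rfl⟩ := List.append_of_mem hvl
      unfold List.Chain' at hch; rw [List.isChain_append] at hch
      obtain ⟨hc1, hc2, hlink⟩ := hch
      -- the walk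
      set w : List V := (v :: (l2 ++ l1)) ++ [v] with hw
      have hBA : ∀ a b : V, arcRel E a b → A a b := fun a b h => (hsub.2 _ h).1
      have hheadeq : (l1 ++ [v]).head? = (l1 ++ v :: l2).head? := by
        cases l1 with
        | nil => rfl
        | cons a l1' => rfl
      have hlasteq : (v :: l2).getLast? = (l1 ++ v :: l2).getLast? := by
        rw [List.getLast?_append]
        cases l2 with
        | nil => rfl
        | cons b l2' =>
          have : (v :: b :: l2').getLast? = some ((v :: b :: l2').getLast (by simp)) :=
            List.getLast?_eq_getLast _
          rw [this]
          rfl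
      have hchainB : List.Chain' (arcRel E) w := by
        have hweq : w = (v :: l2) ++ (l1 ++ [v]) := by simp [hw]
        rw [hweq]; unfold List.Chain'; rw [List.isChain_append]
        refine ⟨hc2, ?_, ?_⟩
        · rw [List.isChain_append]
          refine ⟨hc1, List.isChain_singleton v, ?_⟩
          intro a ha b hb
          simp only [List.head?_cons, Option.mem_some_iff] at hb
          subst hb
          exact hlink a ha v (by simp)
        · intro a ha b hb
          rw [hlasteq] at ha
          rw [hheadeq] at hb
          exact hcl a ha b hb
      have hchainA : List.Chain' A w := hchainB.imp hBA
      have hwhead : ∀ y ∈ w.head?, BelowW par W t y := by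
        intro y hy
        simp only [hw, List.cons_append, List.head?_cons, Option.mem_some_iff] at hy
        subst hy; exact hvBelow
      have hwlast : ∀ y ∈ w.getLast?, BelowW par W t y := by
        intro y hy
        rw [hw, List.getLast?_concat] at hy
        simp only [Option.mem_some_iff] at hy
        subst hy; exact hvBelow
      have hwint : ∃ y ∈ w.tail.dropLast, ¬ BelowW par W t y := by
        refine ⟨x, ?_, hxnb⟩
        have : w.tail = (l2 ++ l1) ++ [v] := by simp [hw]
        rw [this, List.dropLast_concat]
        have hxv : x ≠ v := fun h => hxnb (h ▸ hvBelow)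
        rcases List.mem_append.1 hxl with h1 | h2
        · exact List.mem_append.2 (Or.inr h1)
        · rcases List.mem_cons.1 h2 with h | h
          · exact absurd h hxv
          · exact List.mem_append.2 (Or.inl h)
      obtain ⟨u, huw, huX⟩ := (hguard t htr).2 w hchainA hwhead hwlast hwint
      have hunb : ¬ BelowW par W t u := (hguard t htr).1 u huX
      have huv : u ≠ v := fun h => hunb (h ▸ hvBelow)
      have hul : u ∈ l1 ++ v :: l2 := by
        simp only [hw, List.cons_append, List.mem_cons, List.mem_append,
          List.mem_singleton] at huw
        rcases huw with h | (h | h) | h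
        · exact absurd h huv
        · exact List.mem_append.2 (Or.inr (List.mem_cons.2 (Or.inr h)))
        · exact List.mem_append.2 (Or.inl h)
        · rcases h with h | h
          · exact absurd h huv
          · exact absurd h List.not_mem_nil
      exact ⟨u, hul, Finset.mem_erase.2 ⟨huv, hXsub huX⟩⟩
  have hcard : (Bag.erase v).card = Bag.card - 1 := Finset.card_erase_of_mem hvBag
  have hle : cycleDegree (arcRel E) v ≤ (Bag.erase v).card :=
    Nat.sInf_le ⟨Bag.erase v, rfl, Finset.notMem_erase v Bag, hhit⟩
  have hbagle : Bag.card ≤ Finset.univ.sup fun t' => (dtdBag r par W X t').card := by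
    rw [hBag]
    exact Finset.le_sup (f := fun t' => (dtdBag r par W X t').card) (Finset.mem_univ t)
  calc cycleDegree (arcRel E) v ≤ Bag.card - 1 := hcard ▸ hle
    _ ≤ dtdWidth r par W X := by
        unfold dtdWidth
        exact Nat.sub_le_sub_right hbagle 1

lemma trivial_decomp [Fintype V] [Nonempty V] (A : V → V → Prop) :
    IsDirTreeDecomp A (0 : Fin 1) (fun _ => 0) (fun _ => Finset.univ) (fun _ => ∅) := by
  refine ⟨rfl, fun t => ?_, fun t => Finset.univ_nonempty, fun v => ?_, rfl, fun t' ht' => ?_⟩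
  · have : t = 0 := Subsingleton.elim _ _
    subst this
    exact Relation.ReflTransGen.refl
  · exact ⟨0, Finset.mem_univ v, fun t _ => Subsingleton.elim _ _⟩
  · exact absurd (Subsingleton.elim t' 0) ht'

theorem stmt4 [Fintype V] [DecidableEq V] (A : V → V → Prop) :
    cycleDegeneracy A ≤ dirTreewidth A := by
  apply csSup_le'
  rintro m ⟨U, E, hsub, hdeg⟩
  obtain ⟨u0, hu0⟩ := hsub.1
  have : Nonempty V := ⟨u0⟩
  apply le_csInf
  · exact ⟨dtdWidth (0 : Fin 1) (fun _ => 0) (fun _ => (Finset.univ : Finset V))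
      (fun _ => ∅), 1, 0, _, _, _, trivial_decomp A, rfl⟩
  · rintro w ⟨n, r, par, W, X, hdtd, rfl⟩
    obtain ⟨v, hvU, hv⟩ := key_lemma hsub hdtd
    exact le_trans (hdeg v hvU) hv
end

section
/- For every digraph D, the D-width of D is at least the cycle-degeneracy of D: dw(D) ≥ δ*_c(D). -/
variable {V : Type*}

/-- `D[S]` is strongly connected. -/
def StronglyConnectedOn (A : V → V → Prop) (S : Finset V) : Prop :=
  ∀ x ∈ S, ∀ y ∈ S, Relation.ReflTransGen (fun a b => A a b ∧ a ∈ S ∧ b ∈ S) x y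

/-- Adjacency in the support of `S` in the decomposition `(T, X)`. -/
def SupportAdj {n : ℕ} (T : SimpleGraph (Fin n)) (X : Fin n → Finset V)
    (S : Finset V) (t t' : Fin n) : Prop :=
  T.Adj t t' ∧ ∃ u ∈ S, u ∈ X t ∧ u ∈ X t'

/-- A 𝒟-decomposition of the digraph `A`: a tree `T` with bags `X` such that
for every `S` inducing a strongly connected subdigraph, the support of `S` is
a non-empty connected subgraph of `T`. -/
def IsDDecomp (A : V → V → Prop) {n : ℕ} (T : SimpleGraph (Fin n))
    (X : Fin n → Finset V) : Prop :=
  T.IsTree ∧ ∀ S : Finset V, S.Nonempty → StronglyConnectedOn A S →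
    (∃ t, ∃ u ∈ S, u ∈ X t) ∧
    ∀ t t', (∃ u ∈ S, u ∈ X t) → (∃ u ∈ S, u ∈ X t') →
      Relation.ReflTransGen (SupportAdj T X S) t t'

/-- The width of a 𝒟-decomposition: maximum bag size minus one. -/
def ddWidth {n : ℕ} (X : Fin n → Finset V) : ℕ :=
  (Finset.univ.sup fun t => (X t).card) - 1

/-- The 𝒟-width of the digraph `A`. -/
noncomputable def dWidth (A : V → V → Prop) : ℕ :=
  sInf { w | ∃ (n : ℕ) (T : SimpleGraph (Fin n)) (X : Fin n → Finset V),
    IsDDecomp A T X ∧ ddWidth X = w }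

section Tree

variable {W : Type*} [DecidableEq W] {T : SimpleGraph W}

lemma isPath_concat' {a b c : W} {p : T.Walk a b} (hp : p.IsPath) (h : T.Adj b c)
    (hc : c ∉ p.support) : (p.concat h).IsPath := by
  rw [← SimpleGraph.Walk.isPath_reverse_iff, SimpleGraph.Walk.reverse_concat]
  exact hp.reverse.cons (by simpa [SimpleGraph.Walk.support_reverse] using hc)

lemma geo_mem_dist (hc : T.Connected) {a b x : W} (w : T.Walk a b)
    (hw : w.length = T.dist a b) (hx : x ∈ w.support) :
    T.dist a x + T.dist x b = T.dist a b := by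
  have h1 : T.dist a x ≤ (w.takeUntil x hx).length := SimpleGraph.dist_le _
  have h2 : T.dist x b ≤ (w.dropUntil x hx).length := SimpleGraph.dist_le _
  have h3 : (w.takeUntil x hx).length + (w.dropUntil x hx).length = w.length := by
    have h := congrArg SimpleGraph.Walk.length (w.take_spec hx)
    rwa [SimpleGraph.Walk.length_append] at h
  have h4 := hc.dist_triangle (u := a) (v := x) (w := b)
  omega

lemma tree_adj_dist_ne (hT : T.IsTree) (r : W) {a b : W} (hab : T.Adj a b) :
    T.dist r a ≠ T.dist r b := by
  intro heq
  have hc := hT.isConnected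
  obtain ⟨wa, hwa⟩ := hc.exists_walk_length_eq_dist r a
  obtain ⟨wb, hwb⟩ := hc.exists_walk_length_eq_dist r b
  have hpa : wa.IsPath := wa.isPath_of_length_eq_dist hwa
  have hpb : wb.IsPath := wb.isPath_of_length_eq_dist hwb
  have hbn : b ∉ wa.support := by
    intro hbs
    have := geo_mem_dist hc wa hwa hbs
    have hba : T.dist b a = 0 := by omega
    have : b = a := (hab.symm.reachable.dist_eq_zero_iff).mp hba
    exact hab.ne this.symm
  have hpc : (wa.concat hab).IsPath := isPath_concat' hpa hab hbn
  have := hT.IsAcyclic.path_unique ⟨wa.concat hab, hpc⟩ ⟨wb, hpb⟩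
  have hlen : (wa.concat hab).length = wb.length := by
    rw [Subtype.ext_iff] at this
    exact congrArg SimpleGraph.Walk.length this
  rw [SimpleGraph.Walk.length_concat, hwa, hwb] at hlen
  omega

lemma tree_parent_unique (hT : T.IsTree) (r : W) {s p q : W}
    (hps : T.Adj p s) (hqs : T.Adj q s)
    (hp : T.dist r p + 1 = T.dist r s) (hq : T.dist r q + 1 = T.dist r s) :
    p = q := by
  have hc := hT.isConnected
  obtain ⟨wp, hwp⟩ := hc.exists_walk_length_eq_dist r p
  obtain ⟨wq, hwq⟩ := hc.exists_walk_length_eq_dist r q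
  have hsp : s ∉ wp.support := fun hs => by
    have := geo_mem_dist hc wp hwp hs; omega
  have hsq : s ∉ wq.support := fun hs => by
    have := geo_mem_dist hc wq hwq hs; omega
  have h1 : (wp.concat hps).IsPath :=
    isPath_concat' (wp.isPath_of_length_eq_dist hwp) hps hsp
  have h2 : (wq.concat hqs).IsPath :=
    isPath_concat' (wq.isPath_of_length_eq_dist hwq) hqs hsq
  have heq := hT.IsAcyclic.path_unique ⟨wp.concat hps, h1⟩ ⟨wq.concat hqs, h2⟩
  rw [Subtype.ext_iff] at heq
  have := congrArg (fun (w : T.Walk r s) => w.reverse.getVert 1) heq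
  simpa [SimpleGraph.Walk.reverse_concat] using this

omit [DecidableEq W] in
lemma adj_dist_le_one {a b : W} (h : T.Adj a b) : T.dist a b ≤ 1 := by
  have := SimpleGraph.dist_le (SimpleGraph.Walk.cons h SimpleGraph.Walk.nil)
  simpa using this

lemma tree_desc_step (hT : T.IsTree) (r t0 : W) {s s' : W}
    (hs : T.dist r s = T.dist r t0 + T.dist t0 s) (hne : s ≠ t0) (hadj : T.Adj s s') :
    T.dist r s' = T.dist r t0 + T.dist t0 s' := by
  have hc := hT.isConnected
  have h1 : T.dist s s' ≤ 1 := adj_dist_le_one hadj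
  have h1' : T.dist s' s ≤ 1 := by rwa [SimpleGraph.dist_comm] at h1
  have tri1 : T.dist r s' ≤ T.dist r s + T.dist s s' := hc.dist_triangle
  have tri2 : T.dist r s ≤ T.dist r s' + T.dist s' s := hc.dist_triangle
  have hne1 := tree_adj_dist_ne hT r hadj
  have tri3 : T.dist t0 s' ≤ T.dist t0 s + T.dist s s' := hc.dist_triangle
  have tri4 : T.dist r s' ≤ T.dist r t0 + T.dist t0 s' := hc.dist_triangle
  rcases Nat.lt_or_ge (T.dist r s) (T.dist r s') with hup | hdown
  · omega
  · have hds' : T.dist r s' + 1 = T.dist r s := by omega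
    have hes : 1 ≤ T.dist t0 s := hc.pos_dist_of_ne (Ne.symm hne)
    obtain ⟨w, hw⟩ := hc.exists_walk_length_eq_dist t0 s
    obtain ⟨p, wp, hps, hdecomp⟩ :
        ∃ (p : W) (wp : T.Walk t0 p) (hps : T.Adj p s), w = wp.concat hps := by
      cases w with
      | nil => exact absurd rfl hne.symm
      | cons h q =>
        obtain ⟨x, q', h', hc'⟩ := SimpleGraph.Walk.exists_cons_eq_concat h q
        exact ⟨x, q', h', hc'⟩
    have hlen : wp.length + 1 = T.dist t0 s := by
      rw [hdecomp, SimpleGraph.Walk.length_concat] at hw; omega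
    have hp1 : T.dist t0 p ≤ wp.length := SimpleGraph.dist_le wp
    have hp2 : T.dist t0 s ≤ T.dist t0 p + T.dist p s := hc.dist_triangle
    have hp3 : T.dist p s ≤ 1 := adj_dist_le_one hps
    have hp5 : T.dist r p ≤ T.dist r t0 + T.dist t0 p := hc.dist_triangle
    have hp6 : T.dist r s ≤ T.dist r p + T.dist p s := hc.dist_triangle
    have hpq : p = s' :=
      tree_parent_unique hT r hps hadj.symm (by omega) (by omega)
    subst hpq
    omega

end Tree

section Lists

variable {α : Type*} {R : α → α → Prop}

lemma chain'_rtg_last : ∀ (l : List α), l.Chain' R → ∀ (hne : l ≠ []) (x : α), x ∈ l →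
    Relation.ReflTransGen R x (l.getLast hne)
  | [], _, hne, _, _ => absurd rfl hne
  | [a], _, _, x, hx => by
      simp only [List.mem_singleton] at hx
      subst hx
      exact Relation.ReflTransGen.refl
  | a :: b :: t, hch, hne, x, hx => by
      rw [List.Chain', List.isChain_cons_cons] at hch
      rw [List.getLast_cons (by simp)]
      rcases List.mem_cons.mp hx with rfl | hx'
      · exact Relation.ReflTransGen.head hch.1
          (chain'_rtg_last (b :: t) hch.2 (by simp) b List.mem_cons_self)
      · exact chain'_rtg_last (b :: t) hch.2 (by simp) x hx'

lemma chain'_rtg_head : ∀ (l : List α), l.Chain' R → ∀ (hne : l ≠ []) (x : α), x ∈ l →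
    Relation.ReflTransGen R (l.head hne) x
  | [], _, hne, _, _ => absurd rfl hne
  | a :: t, hch, _, x, hx => by
      rcases List.mem_cons.mp hx with rfl | hx'
      · exact Relation.ReflTransGen.refl
      · match t, hx' with
        | b :: t', hx' =>
          rw [List.Chain', List.isChain_cons_cons] at hch
          exact Relation.ReflTransGen.head hch.1
            (chain'_rtg_head (b :: t') hch.2 (by simp) x hx')

lemma dicycle_rtg {l : List α} (h : IsDicycle R l) {x y : α} (hx : x ∈ l) (hy : y ∈ l) :
    Relation.ReflTransGen R x y := by
  obtain ⟨hne, _, hch, hwrap⟩ := h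
  have hw : R (l.getLast hne) (l.head hne) :=
    hwrap _ (by rw [List.getLast?_eq_getLast_of_ne_nil hne]; rfl)
      _ (by rw [List.head?_eq_head hne]; rfl)
  exact (chain'_rtg_last l hch hne x hx).trans
    (Relation.ReflTransGen.head hw (chain'_rtg_head l hch hne y hy))

lemma dicycle_mono {l : List α} {R' : α → α → Prop} (h : IsDicycle R l)
    (hmono : ∀ a b, R a b → a ∈ l → b ∈ l → R' a b) : IsDicycle R' l := by
  obtain ⟨hne, hnd, hch, hwrap⟩ := h
  refine ⟨hne, hnd, ?_, ?_⟩
  · rw [List.Chain', List.isChain_iff_getElem] at hch ⊢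
    intro i hi
    exact hmono _ _ (hch i hi) (List.getElem_mem _) (List.getElem_mem _)
  · intro a ha b hb
    exact hmono _ _ (hwrap a ha b hb)
      (by rcases List.mem_getLast?_eq_getLast ha with ⟨h', rfl⟩; exact List.getLast_mem h')
      (by rw [List.head?_eq_head hne] at hb; simp only [Option.mem_some_iff] at hb
          subst hb; exact List.head_mem hne)

lemma dicycle_out_arc {l : List α} (h : IsDicycle R l) {x : α} (hx : x ∈ l) :
    ∃ y ∈ l, R x y := by
  obtain ⟨hne, _, hch, hwrap⟩ := h
  by_cases hlast : x = l.getLast hne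
  · subst hlast
    exact ⟨l.head hne, List.head_mem hne,
      hwrap _ (by rw [List.getLast?_eq_getLast_of_ne_nil hne]; rfl)
        _ (by rw [List.head?_eq_head hne]; rfl)⟩
  · obtain ⟨i, rfl⟩ := List.mem_iff_get.mp hx
    have hi : (i : ℕ) < l.length - 1 := by
      have h1 : (i : ℕ) < l.length := i.2
      rcases Nat.lt_or_ge (i : ℕ) (l.length - 1) with h | h
      · exact h
      · exfalso
        apply hlast
        rw [List.getLast_eq_getElem]
        have : (i : ℕ) = l.length - 1 := by omega
        simp [List.get, this]
    rw [List.Chain', List.isChain_iff_getElem] at hch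
    exact ⟨l[(i : ℕ) + 1], List.getElem_mem _, hch i (by omega)⟩

end Lists

theorem stmt5 [Fintype V] [DecidableEq V] (A : V → V → Prop) :
    cycleDegeneracy A ≤ dWidth A := by
  refine csSup_le' ?_
  rintro m ⟨U, E, ⟨hUne, hE⟩, hdeg⟩
  refine le_csInf ⟨_, 1, ⊥, fun _ => Finset.univ, ⟨?_, ?_⟩, rfl⟩ ?_
  · refine ⟨?_, SimpleGraph.isAcyclic_bot⟩
    rw [SimpleGraph.connected_iff]
    refine ⟨fun a b => ?_, ⟨0⟩⟩
    have : a = b := Subsingleton.elim a b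
    subst this
    exact SimpleGraph.Reachable.refl a
  · intro S hS _
    refine ⟨⟨0, hS.choose, hS.choose_spec, Finset.mem_univ _⟩, ?_⟩
    intro t t' _ _
    rw [Subsingleton.elim t t']
  · rintro w ⟨n, T, X, ⟨hTree, hsupp⟩, rfl⟩
    by_cases hloop : ∃ v ∈ U, (v, v) ∈ E
    · obtain ⟨v, hvU, hvv⟩ := hloop
      have h0 : cycleDegree (arcRel E) v = 0 := by
        have hempty : { k | ∃ S : Finset V, S.card = k ∧ v ∉ S ∧
            HitsCyclesThrough (arcRel E) v S } = ∅ := by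
          ext k
          simp only [Set.mem_setOf_eq, Set.mem_empty_iff_false, iff_false]
          rintro ⟨S, hcard, hvS, hhits⟩
          have hcyc : IsDicycle (arcRel E) [v] := by
            refine ⟨by simp, by simp, List.isChain_singleton _, ?_⟩
            intro x hx y hy
            simp at hx hy
            subst hx; subst hy
            exact hvv
          obtain ⟨u, hu, huS⟩ := hhits [v] hcyc (by simp)
          simp only [List.mem_singleton] at hu
          subst hu
          exact hvS huS
        unfold cycleDegree
        rw [hempty, Nat.sInf_empty]
      have hm := hdeg v hvU
      rw [h0] at hm
      exact le_trans hm (Nat.zero_le _)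
    · -- main case
      have hconn := hTree.isConnected
      have hNE : Nonempty (Fin n) := hconn.nonempty
      obtain ⟨r⟩ := hNE
      -- every vertex appears in some bag
      have hbag : ∀ v : V, ∃ t, v ∈ X t := by
        intro v
        have hsc : StronglyConnectedOn A {v} := by
          intro x hx y hy
          rw [Finset.mem_singleton] at hx hy
          subst hx; subst hy
          exact Relation.ReflTransGen.refl
        obtain ⟨t, u, hu, hXu⟩ := (hsupp {v} ⟨v, Finset.mem_singleton_self v⟩ hsc).1
        rw [Finset.mem_singleton] at hu
        subst hu
        exact ⟨t, hXu⟩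
      set f : V → ℕ := fun v => sInf { k | ∃ t, v ∈ X t ∧ T.dist r t = k } with hf
      have hfmem : ∀ v : V, ∃ t, v ∈ X t ∧ T.dist r t = f v := by
        intro v
        obtain ⟨t, ht⟩ := hbag v
        exact Nat.sInf_mem (⟨T.dist r t, t, ht, rfl⟩ :
          Set.Nonempty { k | ∃ t, v ∈ X t ∧ T.dist r t = k })
      have hfle : ∀ (v : V) (t : Fin n), v ∈ X t → f v ≤ T.dist r t :=
        fun v t ht => Nat.sInf_le ⟨t, ht, rfl⟩
      obtain ⟨vs, hvsU, hmax⟩ := U.exists_max_image f hUne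
      obtain ⟨ts, hvts, hDts⟩ := hfmem vs
      -- the key claim
      have hit : HitsCyclesThrough (arcRel E) vs ((X ts).erase vs) := by
        intro l hl hvl
        by_contra hno
        push_neg at hno
        have hXts : ∀ u ∈ l, u ∈ X ts → u = vs := by
          intro u hu hX
          by_contra hne
          exact hno u hu (Finset.mem_erase.mpr ⟨hne, hX⟩)
        have hUl : ∀ x ∈ l, x ∈ U := by
          intro x hx
          obtain ⟨y, _, hxy⟩ := dicycle_out_arc hl hx
          exact (hE _ hxy).2.1
        -- l is not a single loop
        have hsing : ¬ ∃ x, l = [x] := by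
          rintro ⟨x, rfl⟩
          have hx : vs = x := by simpa using hvl
          have harc : (x, x) ∈ E := hl.2.2.2 _ (by simp) _ (by simp)
          exact hloop ⟨x, hx ▸ hvsU, harc⟩
        -- some vertex of the cycle differs from vs
        have hex : ∃ u ∈ l, u ≠ vs := by
          by_contra h
          push_neg at h
          apply hsing
          refine ⟨vs, ?_⟩
          match l, hl.1, hl.2.1 with
          | a :: t, _, hnd =>
            have ha : a = vs := h a List.mem_cons_self
            subst ha
            have ht : t = [] := by
              rw [List.eq_nil_iff_forall_not_mem]
              intro b hb
              have := h b (List.mem_cons_of_mem _ hb)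
              subst this
              exact (List.nodup_cons.mp hnd).1 hb
            rw [ht]
        obtain ⟨u, hul, hune⟩ := hex
        set C := l.toFinset with hC
        have hCsc : StronglyConnectedOn A C := by
          intro x hx y hy
          have hl' : IsDicycle (fun a b => A a b ∧ a ∈ C ∧ b ∈ C) l :=
            dicycle_mono hl (fun a b hab ha hb =>
              ⟨(hE _ hab).1, List.mem_toFinset.mpr ha, List.mem_toFinset.mpr hb⟩)
          exact dicycle_rtg hl' (List.mem_toFinset.mp hx) (List.mem_toFinset.mp hy)
        have hCne : C.Nonempty := ⟨vs, List.mem_toFinset.mpr hvl⟩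
        obtain ⟨tu, hutu, hDtu⟩ := hfmem u
        have hreach : Relation.ReflTransGen (SupportAdj T X C) ts tu :=
          (hsupp C hCne hCsc).2 ts tu ⟨vs, List.mem_toFinset.mpr hvl, hvts⟩
            ⟨u, List.mem_toFinset.mpr hul, hutu⟩
        -- everything reachable in the support of C is below ts
        have hinv : ∀ s, Relation.ReflTransGen (SupportAdj T X C) ts s →
            T.dist r s = T.dist r ts + T.dist ts s := by
          intro s hs
          induction hs with
          | refl => simp [SimpleGraph.dist_self]
          | @tail b c hab hstep ih =>
            obtain ⟨hadj, z, hzC, hzXb, hzXc⟩ := hstep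
            by_cases hb : b = ts
            · have hadj' : T.Adj ts c := hb ▸ hadj
              have hzvs : z = vs := hXts z (List.mem_toFinset.mp hzC) (hb ▸ hzXb)
              have hfv : f vs ≤ T.dist r c := hfle vs c (hzvs ▸ hzXc)
              have h1 := adj_dist_le_one hadj'
              have h2 : T.dist ts c ≠ 0 := by
                intro h0
                exact hadj'.ne (hconn.dist_eq_zero_iff.mp h0)
              have h3 := tree_adj_dist_ne hTree r hadj' 
              have h4 : T.dist r c ≤ T.dist r ts + T.dist ts c := hconn.dist_triangle
              omega
            · exact tree_desc_step hTree r ts ih hb hadj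
        have hfin := hinv tu hreach
        have hle : f u ≤ f vs := hmax u (hUl u hul)
        have hts : ts = tu := hconn.dist_eq_zero_iff.mp (by omega)
        subst hts
        exact hune (hXts u hul hutu)
      -- conclude
      have h1 : cycleDegree (arcRel E) vs ≤ (X ts).card - 1 :=
        Nat.sInf_le ⟨(X ts).erase vs, Finset.card_erase_of_mem hvts,
          Finset.notMem_erase _ _, hit⟩
      have h2 : (X ts).card ≤ Finset.univ.sup fun t => (X t).card :=
        Finset.le_sup (f := fun t => (X t).card) (Finset.mem_univ ts)
      have hm := hdeg vs hvsU
      unfold ddWidth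
      omega
end

section
/- Let D be a digraph and k ≥ δ*_c(D) + 2. Then the k-dicolouring graph of D is connected, i.e., D is k-mixing. -/
variable {V : Type*}

/-- One step in the `k`-dicolouring graph: both are dicolourings and they
differ on exactly one vertex. -/
def DicolStep (A : V → V → Prop) {k : ℕ} (α β : V → Fin k) : Prop :=
  IsDicolouring A α ∧ IsDicolouring A β ∧ ∃! v, α v ≠ β v

/-- `l` is (the list of successive colourings of) a redicolouring sequence from
`α` to `β`. -/
def RedicolPath (A : V → V → Prop) {k : ℕ} (α β : V → Fin k)
    (l : List (V → Fin k)) : Prop :=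
  List.Chain (DicolStep A) α l ∧ (α :: l).getLast (List.cons_ne_nil _ _) = β

/- ### auxiliary lemmas -/


lemma dicycle_imp_mem {A B : V → V → Prop} {l : List V} (h : IsDicycle A l)
    (h2 : ∀ x ∈ l, ∀ y ∈ l, A x y → B x y) : IsDicycle B l := by
  obtain ⟨hne, hnd, hch, hw⟩ := h
  refine ⟨hne, hnd, ?_, ?_⟩
  · change List.IsChain A l at hch; change List.IsChain B l
    rw [List.isChain_iff_getElem] at hch ⊢
    intro i hi
    exact h2 _ (by simp) _ (by simp) (hch i hi)
  · intro x hx y hy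
    exact h2 _ (List.mem_of_mem_getLast? hx) _ (List.mem_of_mem_head? hy) (hw x hx y hy)

lemma dicycle_exists_arc {A : V → V → Prop} {l : List V} (h : IsDicycle A l)
    {x : V} (hx : x ∈ l) : ∃ y ∈ l, A x y := by
  obtain ⟨hne, hnd, hch, hw⟩ := h
  obtain ⟨⟨i, hi⟩, rfl⟩ := List.mem_iff_get.1 hx
  rcases lt_or_ge i (l.length - 1) with h1 | h1
  · exact ⟨l.get ⟨i+1, by omega⟩, List.get_mem _ _, (List.isChain_iff_getElem.1 hch) i (by omega)⟩
  · have hi' : i = l.length - 1 := by omega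
    have hlast : l.get ⟨i, hi⟩ = l.getLast hne := by
      rw [List.getLast_eq_getElem]; simp [hi']
    refine ⟨l.head hne, List.head_mem hne, ?_⟩
    rw [hlast]
    exact hw _ (by rw [List.getLast?_eq_getLast hne]; rfl) _ (by rw [List.head?_eq_head]; rfl)

lemma dicycle_colour {R : V → V → Prop} {C : Type*} {φ : V → C} {c : C} {l : List V}
    (h : IsDicycle (fun a b => R a b ∧ φ a = c ∧ φ b = c) l) {x : V} (hx : x ∈ l) :
    φ x = c := by
  obtain ⟨y, -, -, hxc, -⟩ := dicycle_exists_arc h hx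
  exact hxc

lemma isDicolouring_anti {A B : V → V → Prop} {C : Type*} (h : ∀ x y, A x y → B x y)
    {φ : V → C} (hφ : IsDicolouring B φ) : IsDicolouring A φ := by
  intro c ⟨l, hl⟩
  exact hφ c ⟨l, dicycle_imp_mem hl fun x _ y _ hxy => ⟨h _ _ hxy.1, hxy.2⟩⟩

lemma singleton_dicycle {A : V → V → Prop} {v : V} (h : A v v) : IsDicycle A [v] :=
  ⟨List.cons_ne_nil _ _, List.nodup_singleton v, List.isChain_singleton v,
    by intro x hx y hy; simp_all⟩

/-- `relOn A W` : arcs of `A` inside `W`. -/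
def relOn (A : V → V → Prop) (W : Finset V) : V → V → Prop :=
  fun x y => A x y ∧ x ∈ W ∧ y ∈ W

lemma exists_fresh {k : ℕ} {T : Finset (Fin k)} (h : T.card < k) : ∃ x, x ∉ T := by
  by_contra hc
  push_neg at hc
  have : T = Finset.univ := Finset.eq_univ_iff_forall.2 hc
  rw [this, Finset.card_univ, Fintype.card_fin] at h
  omega

section lift

variable [DecidableEq V] {A : V → V → Prop} {W : Finset V} {v : V} {S : Finset V} {k : ℕ}

/-- Lifting a dicolouring of `W.erase v` to one of `W` by giving `v` a colour
not appearing on the hitting set `S`. -/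
lemma lift_dicol (hS : HitsCyclesThrough (relOn A W) v S) (hvS : v ∉ S)
    {γ : V → Fin k} (hγ : IsDicolouring (relOn A (W.erase v)) γ)
    {x : Fin k} (hx : x ∉ S.image γ) :
    IsDicolouring (relOn A W) (Function.update γ v x) := by
  intro c ⟨l, hl⟩
  by_cases hv : v ∈ l
  · have hxc : x = c := by
      have := dicycle_colour hl hv
      rwa [Function.update_self] at this
    obtain ⟨u, hu, huS⟩ := hS l (dicycle_imp_mem hl fun a _ b _ h => h.1) hv
    have huv : u ≠ v := fun h => hvS (h ▸ huS)
    have : γ u = c := by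
      have := dicycle_colour hl hu
      rwa [Function.update_of_ne huv] at this
    exact hx (Finset.mem_image.2 ⟨u, huS, by rw [this, hxc]⟩)
  · refine hγ c ⟨l, dicycle_imp_mem hl fun a ha b hb h => ?_⟩
    have hav : a ≠ v := fun h => hv (h ▸ ha)
    have hbv : b ≠ v := fun h => hv (h ▸ hb)
    refine ⟨⟨h.1.1, Finset.mem_erase.2 ⟨hav, h.1.2.1⟩, Finset.mem_erase.2 ⟨hbv, h.1.2.2⟩⟩, ?_, ?_⟩
    · rw [← Function.update_of_ne hav x γ]; exact h.2.1
    · rw [← Function.update_of_ne hbv x γ]; exact h.2.2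

lemma step_lift (hS : HitsCyclesThrough (relOn A W) v S) (hvS : v ∉ S)
    (hk2 : S.card + 2 ≤ k) {γ γ' : V → Fin k}
    (hstep : DicolStep (relOn A (W.erase v)) γ γ') {x : Fin k} (hx : x ∉ S.image γ) :
    ∃ x', x' ∉ S.image γ' ∧ Relation.ReflTransGen (DicolStep (relOn A W))
      (Function.update γ v x) (Function.update γ' v x') := by
  obtain ⟨hγ, hγ', u, hu, huniq⟩ := hstep
  have hoff : ∀ w, w ≠ u → γ w = γ' w := by
    intro w hw
    by_contra h
    exact hw (huniq w h)
  by_cases huv : u = v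
  · refine ⟨x, ?_, ?_⟩
    · have : S.image γ' = S.image γ := by
        apply Finset.image_congr
        intro s hs
        simp only [Finset.mem_coe] at hs
        refine (hoff s fun h => hvS ?_).symm
        rwa [h, huv] at hs
      rwa [this]
    · have : Function.update γ v x = Function.update γ' v x := by
        funext w
        by_cases hw : w = v
        · subst hw; simp
        · rw [Function.update_of_ne hw, Function.update_of_ne hw]
          exact hoff w (fun h => hw (h.trans huv))
      rw [this]
  · -- the changed vertex u is not v
    have himg : S.image γ' ⊆ insert (γ' u) (S.image γ) := by
      intro c hc
      obtain ⟨s, hs, rfl⟩ := Finset.mem_image.1 hc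
      by_cases hsu : s = u
      · subst hsu; exact Finset.mem_insert_self _ _
      · exact Finset.mem_insert_of_mem
          (Finset.mem_image.2 ⟨s, hs, hoff s hsu⟩)
    obtain ⟨x', hx'⟩ := exists_fresh (T := insert (γ' u) (S.image γ))
      (lt_of_le_of_lt (Finset.card_insert_le _ _)
        (by have := Finset.card_image_le (s := S) (f := γ); omega))
    have hx'γ : x' ∉ S.image γ := fun h => hx' (Finset.mem_insert_of_mem h)
    have hx'γ' : x' ∉ S.image γ' := fun h => hx' (himg h)
    refine ⟨x', hx'γ', ?_⟩
    have d1 : IsDicolouring (relOn A W) (Function.update γ v x) := lift_dicol hS hvS hγ hx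
    have d2 : IsDicolouring (relOn A W) (Function.update γ v x') := lift_dicol hS hvS hγ hx'γ
    have d3 : IsDicolouring (relOn A W) (Function.update γ' v x') := lift_dicol hS hvS hγ' hx'γ'
    have step2 : DicolStep (relOn A W) (Function.update γ v x') (Function.update γ' v x') := by
      refine ⟨d2, d3, u, ?_, ?_⟩
      · show Function.update γ v x' u ≠ Function.update γ' v x' u
        rw [Function.update_of_ne huv, Function.update_of_ne huv]; exact hu
      · intro w hw
        have hwv : w ≠ v := by
          intro h; subst h; simp at hw
        rw [Function.update_of_ne hwv, Function.update_of_ne hwv] at hw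
        exact huniq w hw
    by_cases hxx : x = x'
    · subst hxx; exact Relation.ReflTransGen.single step2
    · refine Relation.ReflTransGen.head ?_ (Relation.ReflTransGen.single step2)
      refine ⟨d1, d2, v, by simpa using hxx, ?_⟩
      intro w hw
      by_contra hwv
      rw [Function.update_of_ne hwv, Function.update_of_ne hwv] at hw
      exact hw rfl

lemma path_lift (hS : HitsCyclesThrough (relOn A W) v S) (hvS : v ∉ S)
    (hk2 : S.card + 2 ≤ k) {a b : V → Fin k}
    (h : Relation.ReflTransGen (DicolStep (relOn A (W.erase v))) a b) :
    ∀ x, x ∉ S.image a → ∃ x', x' ∉ S.image b ∧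
      Relation.ReflTransGen (DicolStep (relOn A W))
        (Function.update a v x) (Function.update b v x') := by
  induction h with
  | refl => exact fun x hx => ⟨x, hx, Relation.ReflTransGen.refl⟩
  | tail h1 h2 ih =>
    intro x hx
    obtain ⟨x1, hx1, hp1⟩ := ih x hx
    obtain ⟨x2, hx2, hp2⟩ := step_lift hS hvS hk2 h2 hx1
    exact ⟨x2, hx2, hp1.trans hp2⟩

end lift

/- ### base case: when every colouring is a dicolouring -/

lemma all_dicol_path [Fintype V] [DecidableEq V] {B : V → V → Prop} {k : ℕ}
    (hB : ∀ γ : V → Fin k, IsDicolouring B γ) (α β : V → Fin k) :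
    Relation.ReflTransGen (DicolStep B) α β := by
  classical
  suffices h : ∀ n (α : V → Fin k), (Finset.univ.filter (fun u => α u ≠ β u)).card = n →
      Relation.ReflTransGen (DicolStep B) α β by
    exact h _ α rfl
  intro n
  induction n with
  | zero =>
    intro α hα
    have : α = β := by
      funext u
      by_contra h
      have : u ∈ Finset.univ.filter (fun u => α u ≠ β u) := by simp [h]
      rw [Finset.card_eq_zero] at hα
      simp [hα] at this
    rw [this]
  | succ n ih =>
    intro α hα
    have hne : (Finset.univ.filter (fun u => α u ≠ β u)).Nonempty := by
      rw [← Finset.card_pos, hα]; omega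
    obtain ⟨u, hu⟩ := hne
    simp only [Finset.mem_filter] at hu
    set α' := Function.update α u (β u) with hα'
    have hstep : DicolStep B α α' := by
      refine ⟨hB α, hB α', u, ?_, ?_⟩
      · show α u ≠ α' u
        rw [hα', Function.update_self]
        exact hu.2
      · intro w hw
        by_contra hwu
        rw [hα', Function.update_of_ne hwu] at hw
        exact hw rfl
    have hcard : (Finset.univ.filter (fun w => α' w ≠ β w)).card = n := by
      have hsub : Finset.univ.filter (fun w => α' w ≠ β w)
          = (Finset.univ.filter (fun w => α w ≠ β w)).erase u := by
        ext w
        simp only [Finset.mem_filter, Finset.mem_erase, Finset.mem_univ, true_and]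
        constructor
        · intro hw
          have hwu : w ≠ u := by
            intro h; subst h
            rw [hα', Function.update_self] at hw
            exact hw rfl
          rw [hα', Function.update_of_ne hwu] at hw
          exact ⟨hwu, hw⟩
        · intro ⟨hwu, hw⟩
          rw [hα', Function.update_of_ne hwu]
          exact hw
      rw [hsub, Finset.card_erase_of_mem (by simp [hu.2]), hα]
      omega
    exact Relation.ReflTransGen.head hstep (ih α' hcard)

/- ### cycle-degree bounds -/

lemma cycleDegree_le_card [Fintype V] [DecidableEq V] (B : V → V → Prop) (v : V) :
    cycleDegree B v ≤ Fintype.card V := by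
  classical
  by_cases hloop : B v v
  · have hempty : { n | ∃ S : Finset V, S.card = n ∧ v ∉ S ∧ HitsCyclesThrough B v S } = ∅ := by
      ext n
      simp only [Set.mem_setOf_eq, Set.mem_empty_iff_false, iff_false]
      rintro ⟨S, -, hvS, hhit⟩
      obtain ⟨u, hu, huS⟩ := hhit [v] (singleton_dicycle hloop) (by simp)
      simp only [List.mem_singleton] at hu
      exact hvS (hu ▸ huS)
    rw [cycleDegree, hempty]
    simp [Nat.sInf_empty]
  · refine le_trans (Nat.sInf_le (m := (Finset.univ.erase v).card) ?_) ?_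
    · refine ⟨Finset.univ.erase v, rfl, Finset.notMem_erase _ _, ?_⟩
      intro l hl hv
      by_cases hex : ∃ u ∈ l, u ≠ v
      · obtain ⟨u, hu, huv⟩ := hex
        exact ⟨u, hu, Finset.mem_erase.2 ⟨huv, Finset.mem_univ u⟩⟩
      · push_neg at hex
        exfalso
        apply hloop
        have hlv : l = [v] := by
          obtain ⟨hne, hnd, -, -⟩ := hl
          cases l with
          | nil => exact absurd rfl hne
          | cons a t =>
            have ha : a = v := hex a (by simp)
            have ht : t = [] := by
              rw [List.eq_nil_iff_forall_not_mem]
              intro b hb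
              have : b = v := hex b (List.mem_cons_of_mem _ hb)
              rw [List.nodup_cons] at hnd
              exact hnd.1 (ha ▸ this ▸ hb)
            rw [ha, ht]
        subst hlv
        obtain ⟨-, -, -, hw⟩ := hl
        exact hw v rfl v rfl
    · simp [Finset.card_erase_of_mem]

lemma hitsCyclesThrough_erase [Fintype V] [DecidableEq V] {B : V → V → Prop} {v : V}
    (hloop : ¬ B v v) : HitsCyclesThrough B v (Finset.univ.erase v) := by
  intro l hl hv
  by_cases hex : ∃ u ∈ l, u ≠ v
  · obtain ⟨u, hu, huv⟩ := hex
    exact ⟨u, hu, Finset.mem_erase.2 ⟨huv, Finset.mem_univ u⟩⟩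
  · push_neg at hex
    exfalso
    apply hloop
    have hlv : l = [v] := by
      obtain ⟨hne, hnd, -, -⟩ := hl
      cases l with
      | nil => exact absurd rfl hne
      | cons a t =>
        have ha : a = v := hex a (by simp)
        have ht : t = [] := by
          rw [List.eq_nil_iff_forall_not_mem]
          intro b hb
          have : b = v := hex b (List.mem_cons_of_mem _ hb)
          rw [List.nodup_cons] at hnd
          exact hnd.1 (ha ▸ this ▸ hb)
        rw [ha, ht]
    subst hlv
    obtain ⟨-, -, -, hw⟩ := hl
    exact hw v rfl v rfl

/-- The arcs of `A` inside `W`, as a finite arc set. -/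
noncomputable def arcsIn [Fintype V] (A : V → V → Prop) (W : Finset V) : Finset (V × V) :=
  letI := Classical.decPred (fun p : V × V => A p.1 p.2 ∧ p.1 ∈ W ∧ p.2 ∈ W)
  Finset.univ.filter (fun p => A p.1 p.2 ∧ p.1 ∈ W ∧ p.2 ∈ W)

lemma arcsIn_iff [Fintype V] (A : V → V → Prop) (W : Finset V) (x y : V) :
    arcRel (arcsIn A W) x y ↔ relOn A W x y := by
  classical
  simp [arcsIn, arcRel, relOn, Finset.mem_filter]

lemma exists_low_vertex [Fintype V] [DecidableEq V] (A : V → V → Prop) {W : Finset V}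
    (hW : W.Nonempty) :
    ∃ v ∈ W, cycleDegree (arcRel (arcsIn A W)) v ≤ cycleDegeneracy A := by
  by_contra h
  push_neg at h
  have hmem : cycleDegeneracy A + 1 ∈ { m | ∃ (U : Finset V) (E : Finset (V × V)),
      IsSubdigraph A U E ∧ ∀ v ∈ U, m ≤ cycleDegree (arcRel E) v } := by
    refine ⟨W, arcsIn A W, ⟨hW, ?_⟩, fun v hv => h v hv⟩
    intro p hp
    classical
    simp only [arcsIn, Finset.mem_filter] at hp
    exact hp.2
  have hbdd : BddAbove { m | ∃ (U : Finset V) (E : Finset (V × V)),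
      IsSubdigraph A U E ∧ ∀ v ∈ U, m ≤ cycleDegree (arcRel E) v } := by
    refine ⟨Fintype.card V, fun m hm => ?_⟩
    obtain ⟨U, E, ⟨⟨u, hu⟩, -⟩, hall⟩ := hm
    exact le_trans (hall u hu) (cycleDegree_le_card _ _)
  have := le_csSup hbdd hmem
  rw [cycleDegeneracy] at this
  omega

/- ### main lemma -/

lemma main_lemma [Fintype V] [DecidableEq V] (A : V → V → Prop) {k : ℕ}
    (hk : cycleDegeneracy A + 2 ≤ k) (W : Finset V) :
    ∀ α β : V → Fin k, IsDicolouring (relOn A W) α → IsDicolouring (relOn A W) β →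
      Relation.ReflTransGen (DicolStep (relOn A W)) α β := by
  induction W using Finset.strongInductionOn with
  | _ W ih =>
  intro α β hα hβ
  rcases W.eq_empty_or_nonempty with rfl | hWne
  · apply all_dicol_path
    intro γ c hcyc
    obtain ⟨l, hl⟩ := hcyc
    have hne := hl.1
    obtain ⟨y, -, ⟨-, hmem, -⟩, -⟩ := dicycle_exists_arc hl (List.head_mem hne)
    exact Finset.notMem_empty _ hmem
  · obtain ⟨v, hvW, hvdeg⟩ := exists_low_vertex A hWne
    have harc := arcsIn_iff A W
    by_cases hloop : relOn A W v v
    · exact absurd ⟨[v], singleton_dicycle ⟨hloop, rfl, rfl⟩⟩ (hα (α v))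
    have hloop' : ¬ arcRel (arcsIn A W) v v := fun h => hloop ((harc v v).1 h)
    obtain ⟨S, hScard, hvS, hShits⟩ := Nat.sInf_mem
      (s := { n | ∃ S : Finset V, S.card = n ∧ v ∉ S ∧
        HitsCyclesThrough (arcRel (arcsIn A W)) v S })
      ⟨_, Finset.univ.erase v, rfl, Finset.notMem_erase _ _, hitsCyclesThrough_erase hloop'⟩
    rw [cycleDegree] at hvdeg
    have hk2 : S.card + 2 ≤ k := by rw [hScard] at *; omega
    have hShits' : HitsCyclesThrough (relOn A W) v S := fun l hl hv =>
      hShits l (dicycle_imp_mem hl fun x _ y _ hxy => (harc x y).2 hxy) hv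
    have hWsub : ∀ x y, relOn A (W.erase v) x y → relOn A W x y := fun x y h =>
      ⟨h.1, Finset.mem_of_mem_erase h.2.1, Finset.mem_of_mem_erase h.2.2⟩
    have hα' := isDicolouring_anti hWsub hα
    have hβ' := isDicolouring_anti hWsub hβ
    have hIH := ih (W.erase v) (Finset.erase_ssubset hvW) α β hα' hβ'
    obtain ⟨x₀, hx₀⟩ := exists_fresh (T := S.image α)
      (by have := Finset.card_image_le (s := S) (f := α); omega)
    obtain ⟨x₁, hx₁, hpath⟩ := path_lift hShits' hvS hk2 hIH x₀ hx₀
    have hpre : Relation.ReflTransGen (DicolStep (relOn A W)) α (Function.update α v x₀) := by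
      by_cases h : x₀ = α v
      · rw [h, Function.update_eq_self]
      · refine Relation.ReflTransGen.single ⟨hα, lift_dicol hShits' hvS hα' hx₀, v, ?_, ?_⟩
        · show α v ≠ Function.update α v x₀ v
          rw [Function.update_self]
          exact fun hh => h hh.symm
        · intro w hw
          by_contra hwv
          rw [Function.update_of_ne hwv] at hw
          exact hw rfl
    have happ : Relation.ReflTransGen (DicolStep (relOn A W)) (Function.update β v x₁) β := by
      by_cases h : x₁ = β v
      · rw [h, Function.update_eq_self]
      · refine Relation.ReflTransGen.single ⟨lift_dicol hShits' hvS hβ' hx₁, hβ, v, ?_, ?_⟩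
        · show Function.update β v x₁ v ≠ β v
          rw [Function.update_self]
          exact h
        · intro w hw
          by_contra hwv
          rw [Function.update_of_ne hwv] at hw
          exact hw rfl
    exact hpre.trans (hpath.trans happ)

theorem stmt6 [Fintype V] [DecidableEq V] (A : V → V → Prop) (k : ℕ)
    (hk : cycleDegeneracy A + 2 ≤ k) (α β : V → Fin k)
    (hα : IsDicolouring A α) (hβ : IsDicolouring A β) :
    Relation.ReflTransGen (DicolStep A) α β := by
  have hsub : ∀ x y, relOn A Finset.univ x y → A x y := fun x y h => h.1
  have hsup : ∀ x y, A x y → relOn A Finset.univ x y := fun x y h =>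
    ⟨h, Finset.mem_univ x, Finset.mem_univ y⟩
  have hmain := main_lemma A hk Finset.univ α β
    (isDicolouring_anti hsub hα) (isDicolouring_anti hsub hβ)
  refine Relation.ReflTransGen.mono ?_ _ _ hmain
  intro γ γ' hstep
  exact ⟨isDicolouring_anti hsup hstep.1, isDicolouring_anti hsup hstep.2.1, hstep.2.2⟩
end

section
/- Let D be a digraph with a cycle-degeneracy ordering v_1, …, v_n (i.e., for each i there is a set X_i ⊆ {v_{i+1},…,v_n} with |X_i| ≤ δ*_c(D) such that every directed cycle of D containing v_i intersects {v_1,…,v_{i−1}} ∪ X_i). Let G be the undirected graph on V(D) with edges {v_i v_j : v_j ∈ X_i}. Then every proper colouring of G is a dicolouring of D. -/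
variable {V : Type*}

theorem stmt8 [Fintype V] [DecidableEq V] (A : V → V → Prop) (n : ℕ)
    (e : Fin n ≃ V) (X : Fin n → Finset V)
    (hcard : ∀ i, (X i).card ≤ cycleDegeneracy A)
    (hlater : ∀ i, ∀ u ∈ X i, ∃ j, i < j ∧ e j = u)
    (hhit : ∀ i, ∀ l : List V, IsDicycle A l → e i ∈ l →
      ∃ x ∈ l, x ∈ X i ∨ ∃ j, j < i ∧ e j = x)
    {C : Type*} (φ : V → C)
    (hφ : ∀ i, ∀ u ∈ X i, φ (e i) ≠ φ u) :
    IsDicolouring A φ := by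
  intro c hc
  obtain ⟨l, hne, hnd, hch, hlast⟩ := hc
  have hcol : ∀ x ∈ l, φ x = c := by
    obtain ⟨a, t, rfl⟩ := List.exists_cons_of_ne_nil hne
    have hL : (a::t).getLast? = some ((a::t).getLast (by simp)) :=
      List.getLast?_eq_getLast _
    have ha : φ a = c :=
      (hlast _ (by rw [hL]; rfl) a rfl).2.2
    have key : ∀ (b : V) (t' : List V), φ b = c →
        List.Chain (fun x y => A x y ∧ φ x = c ∧ φ y = c) b t' →
        ∀ x ∈ t', φ x = c := by
      intro b t'
      induction t' generalizing b with
      | nil => intro _ _ x hx; simp at hx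
      | cons d t'' ih =>
        intro hb hc x hx
        rcases List.chain_cons.mp hc with ⟨h1, h2⟩
        rcases List.mem_cons.mp hx with rfl | hx
        · exact h1.2.2
        · exact ih d h1.2.2 h2 x hx
    intro x hx
    rcases List.mem_cons.mp hx with rfl | hx
    · exact ha
    · exact key a t ha hch x hx
  have hA : IsDicycle A l :=
    ⟨hne, hnd, hch.imp (fun a b h => h.1), fun x hx y hy => (hlast x hx y hy).1⟩
  have hSne : (Finset.univ.filter (fun i : Fin n => e i ∈ l)).Nonempty := by
    obtain ⟨a, t, rfl⟩ := List.exists_cons_of_ne_nil hne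
    exact ⟨e.symm a, by simp⟩
  set S := Finset.univ.filter (fun i : Fin n => e i ∈ l) with hS
  set i := S.min' hSne with hi
  have hil : e i ∈ l := by
    have := S.min'_mem hSne
    simp only [hS, Finset.mem_filter] at this
    exact this.2
  obtain ⟨x, hxl, hx⟩ := hhit i l hA hil
  rcases hx with hx | ⟨j, hji, rfl⟩
  · exact hφ i x hx (by rw [hcol _ hil, hcol _ hxl])
  · have : i ≤ j := S.min'_le j (by simp [hS, hxl])
    exact absurd hji (not_lt.mpr this)
end

section
/- For any digraph D, χ⃗(D) ≤ χ⃗_g(D) ≤ Δ_c(D) + 1, where Δ_c(D) is the maximum cycle-degree of D. -/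
variable {V : Type*}

/-- A greedy dicolouring: there is an ordering (given by an injective rank
function `o`) such that, for each vertex `v` and each colour `c < φ v`, the set
of earlier vertices coloured `c`, together with `v`, contains a directed
cycle. -/
def IsGreedy (A : V → V → Prop) {k : ℕ} (φ : V → Fin k) : Prop :=
  IsDicolouring A φ ∧ ∃ o : V → ℕ, Function.Injective o ∧
    ∀ v : V, ∀ c : Fin k, c < φ v →
      ∃ l, IsDicycle A l ∧ ∀ x ∈ l, (o x < o v ∧ φ x = c) ∨ x = v

/-- The digrundy number: the maximum number of colours used by a greedy
dicolouring. -/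
noncomputable def digrundy [Fintype V] (A : V → V → Prop) : ℕ :=
  sSup { m | ∃ (k : ℕ) (φ : V → Fin k),
    IsGreedy A φ ∧ (Finset.univ.image φ).card = m }

/- ### Auxiliary lemmas -/

lemma memHead {l : List V} {x : V} (h : x ∈ l.head?) : x ∈ l := by
  cases l with
  | nil => simp at h
  | cons a t =>
    simp only [List.head?, Option.mem_def, Option.some.injEq] at h
    simp [← h]

lemma memLast {l : List V} {x : V} (h : x ∈ l.getLast?) : x ∈ l := by
  obtain ⟨h', rfl⟩ := List.mem_getLast?_eq_getLast h
  exact List.getLast_mem h'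

lemma chain'_and {A : V → V → Prop} {p : V → Prop} {l : List V} (h : l.Chain' A)
    (hp : ∀ x ∈ l, p x) : l.Chain' (fun x y => A x y ∧ p x ∧ p y) := by
  induction l with
  | nil => exact List.isChain_nil
  | cons a t ih =>
    simp only [List.Chain', List.isChain_cons] at h ⊢
    exact ⟨fun y hy => ⟨h.1 y hy, hp a (by simp),
        hp y (List.mem_cons_of_mem _ (memHead hy))⟩,
      ih h.2 (fun x hx => hp x (List.mem_cons_of_mem _ hx))⟩

lemma chain'_tail {B : V → V → Prop} {p : V → Prop} (hB : ∀ x y, B x y → p y) :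
    ∀ (l : List V), l.Chain' B → ∀ x ∈ l.tail, p x := by
  intro l
  induction l with
  | nil => simp
  | cons a t ih =>
    intro h x hx
    simp only [List.Chain', List.isChain_cons] at h
    simp only [List.tail_cons] at hx
    cases t with
    | nil => simp at hx
    | cons b u =>
      rcases List.mem_cons.mp hx with rfl | hx'
      · exact hB a x (h.1 x rfl)
      · exact ih h.2 x (by simpa using hx')

/-- In a dicycle of the restricted digraph, every vertex satisfies `p`. -/
lemma dicycle_and_forall {A : V → V → Prop} {p : V → Prop} {l : List V}
    (h : IsDicycle (fun x y => A x y ∧ p x ∧ p y) l) : ∀ x ∈ l, p x := by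
  obtain ⟨hne, hnd, hch, hcl⟩ := h
  have hlast := List.getLast?_eq_getLast_of_ne_nil hne
  have hhead : l.head? = some (l.head hne) := List.head?_eq_head hne
  have hph : p (l.head hne) := (hcl _ (by rw [hlast]; rfl) _ (by rw [hhead]; rfl)).2.2
  intro x hx
  cases l with
  | nil => simp at hx
  | cons a t =>
    rcases List.mem_cons.mp hx with rfl | hx'
    · exact hph
    · exact chain'_tail (fun x y h => h.2.2) (a :: t) hch x (by simpa using hx')

lemma dicycle_of_and {A : V → V → Prop} {p : V → Prop} {l : List V}
    (h : IsDicycle (fun x y => A x y ∧ p x ∧ p y) l) : IsDicycle A l :=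
  ⟨h.1, h.2.1, h.2.2.1.imp (fun _ _ hxy => hxy.1),
    fun x hx y hy => (h.2.2.2 x hx y hy).1⟩

lemma dicycle_and {A : V → V → Prop} {p : V → Prop} {l : List V}
    (h : IsDicycle A l) (hp : ∀ x ∈ l, p x) :
    IsDicycle (fun x y => A x y ∧ p x ∧ p y) l :=
  ⟨h.1, h.2.1, chain'_and h.2.2.1 hp,
    fun x hx y hy => ⟨h.2.2.2 x hx y hy, hp x (memLast hx), hp y (memHead hy)⟩⟩

lemma no_loop {C : Type*} {A : V → V → Prop} {φ : V → C}
    (h : IsDicolouring A φ) (v : V) : ¬ A v v := by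
  intro hvv
  exact h (φ v) ⟨[v], by simp, by simp, List.isChain_singleton _, by simp [hvv]⟩

lemma eq_singleton_of_forall {l : List V} {v : V} (hne : l ≠ []) (hnd : l.Nodup)
    (h : ∀ x ∈ l, x = v) : l = [v] := by
  cases l with
  | nil => exact absurd rfl hne
  | cons a t =>
    have ha : a = v := h a (by simp)
    have ht : t = [] := by
      cases t with
      | nil => rfl
      | cons b u =>
        have hb : b = v := h b (by simp)
        exact absurd (by simp [ha, hb]) (List.nodup_cons.mp hnd).1
    simp [ha, ht]

/-- Compressing a dicolouring onto its image. -/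
lemma compress [Fintype V] {k : ℕ} {A : V → V → Prop} (φ : V → Fin k)
    (h : IsDicolouring A φ) :
    ∃ ψ : V → Fin ((Finset.univ.image φ).card), IsDicolouring A ψ := by
  have hmem : ∀ v, φ v ∈ Finset.univ.image φ :=
    fun v => Finset.mem_image_of_mem _ (Finset.mem_univ v)
  let e := ((Finset.univ.image φ).orderIsoOfFin rfl).symm
  refine ⟨fun v => e ⟨φ v, hmem v⟩, ?_⟩
  rintro c ⟨l, hl⟩
  have hp : ∀ x ∈ l, e ⟨φ x, hmem x⟩ = c := dicycle_and_forall hl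
  have hne := hl.1
  have hhead : l.head hne ∈ l := List.head_mem hne
  refine h (φ (l.head hne)) ⟨l, dicycle_and (dicycle_of_and hl) (fun x hx => ?_)⟩
  have : e ⟨φ x, hmem x⟩ = e ⟨φ (l.head hne), hmem _⟩ := by
    rw [hp x hx, hp _ hhead]
  exact Subtype.ext_iff.mp (e.injective this)

/-- The greedy colouring along the rank `r`. -/
noncomputable def gcol (A : V → V → Prop) (r : V → ℕ) (v : V) : ℕ :=
  sInf {c | ¬ ∃ l : List V, IsDicycle A l ∧
    ∀ x ∈ l, (∃ _ : r x < r v, gcol A r x = c) ∨ x = v}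
termination_by r v

lemma gcol_eq (A : V → V → Prop) (r : V → ℕ) (v : V) :
    gcol A r v = sInf {c | ¬ ∃ l : List V, IsDicycle A l ∧
      ∀ x ∈ l, (r x < r v ∧ gcol A r x = c) ∨ x = v} := by
  rw [gcol]
  congr 1
  ext c
  simp only [Set.mem_setOf_eq, exists_prop]

lemma gcol_spec [Fintype V] {A : V → V → Prop} (r : V → ℕ) (v : V)
    (hloop : ¬ A v v) :
    gcol A r v ≤ (Finset.univ.filter (fun x => r x < r v)).card ∧
      ¬ ∃ l : List V, IsDicycle A l ∧
        ∀ x ∈ l, (r x < r v ∧ gcol A r x = gcol A r v) ∨ x = v := by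
  classical
  set E := Finset.univ.filter (fun x => r x < r v) with hE
  set T := {c : ℕ | ¬ ∃ l : List V, IsDicycle A l ∧
      ∀ x ∈ l, (r x < r v ∧ gcol A r x = c) ∨ x = v} with hT
  have hex : ∃ c ∈ T, c ≤ E.card := by
    by_contra hcon
    push_neg at hcon
    have H : ∀ c : ℕ, ∃ u, c ∈ Finset.range (E.card + 1) → u ∈ E ∧ gcol A r u = c := by
      intro c
      by_cases hc : c ∈ Finset.range (E.card + 1)
      · have hcT : c ∉ T := fun hh => absurd (hcon c hh) (by
          simpa using Nat.lt_succ_iff.mp (Finset.mem_range.mp hc))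
        rw [hT, Set.mem_setOf_eq, not_not] at hcT
        obtain ⟨l, hl, hx⟩ := hcT
        have : ∃ x ∈ l, x ≠ v := by
          by_contra hall
          push_neg at hall
          have hlv : l = [v] := eq_singleton_of_forall hl.1 hl.2.1 hall
          subst hlv
          exact hloop (hl.2.2.2 v (by simp) v (by simp))
        obtain ⟨x, hxl, hxv⟩ := this
        obtain ⟨h1, h2⟩ := (hx x hxl).resolve_right hxv
        exact ⟨x, fun _ => ⟨by simp [hE, h1], h2⟩⟩
      · exact ⟨v, fun h => absurd h hc⟩
    choose f hf using H
    have hcount : (Finset.range (E.card + 1)).card ≤ E.card :=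
      Finset.card_le_card_of_injOn f (fun c hc => (hf c hc).1)
        (fun c1 hc1 c2 hc2 heq => by
          have e1 := (hf c1 hc1).2
          have e2 := (hf c2 hc2).2
          rw [← e1, ← e2, heq])
    simp [Finset.card_range] at hcount
  obtain ⟨c, hcT, hcle⟩ := hex
  constructor
  · calc gcol A r v = sInf T := gcol_eq A r v
      _ ≤ c := Nat.sInf_le hcT
      _ ≤ E.card := hcle
  · have : gcol A r v ∈ T := by
      rw [gcol_eq A r v]
      exact Nat.sInf_mem ⟨c, hcT⟩
    exact this

lemma gcol_lt_card [Fintype V] {A : V → V → Prop} (r : V → ℕ) (v : V)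
    (hloop : ¬ A v v) : gcol A r v < Fintype.card V := by
  classical
  have h1 := (gcol_spec r v hloop).1
  have hsub : (Finset.univ.filter (fun x => r x < r v)) ⊆ Finset.univ.erase v := by
    intro x hx
    rw [Finset.mem_erase]
    refine ⟨?_, Finset.mem_univ x⟩
    rintro rfl
    simp at hx
  have h2 := Finset.card_le_card hsub
  rw [Finset.card_erase_of_mem (Finset.mem_univ v), Finset.card_univ] at h2
  have h3 : 1 ≤ Fintype.card V := Fintype.card_pos_iff.mpr ⟨v⟩
  omega

lemma exists_greedy [Fintype V] {A : V → V → Prop} (hloop : ∀ w, ¬ A w w) :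
    ∃ φ : V → Fin (Fintype.card V), IsGreedy A φ := by
  classical
  set r : V → ℕ := fun v => ((Fintype.equivFin V) v : ℕ) with hrdef
  have hr : Function.Injective r := fun a b h =>
    (Fintype.equivFin V).injective (Fin.val_injective h)
  refine ⟨fun v => ⟨gcol A r v, gcol_lt_card r v (hloop v)⟩, ?_, r, hr, ?_⟩
  · rintro c ⟨l, hl⟩
    have hp : ∀ x ∈ l,
        (⟨gcol A r x, gcol_lt_card r x (hloop x)⟩ : Fin (Fintype.card V)) = c :=
      dicycle_and_forall hl
    have hpl : ∀ x ∈ l, gcol A r x = (c : ℕ) := by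
      intro x hx
      have := congrArg Fin.val (hp x hx)
      simpa using this
    have hlne : l.toFinset.Nonempty := by
      cases l with
      | nil => exact absurd rfl hl.1
      | cons a t => exact ⟨a, by simp⟩
    obtain ⟨v, hvmem, hvmax⟩ := Finset.exists_max_image l.toFinset r hlne
    rw [List.mem_toFinset] at hvmem
    refine (gcol_spec r v (hloop v)).2 ⟨l, dicycle_of_and hl, fun x hx => ?_⟩
    by_cases hxv : x = v
    · exact Or.inr hxv
    · refine Or.inl ⟨lt_of_le_of_ne (hvmax x (List.mem_toFinset.mpr hx))
        (fun h => hxv (hr h)), ?_⟩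
      rw [hpl x hx, ← hpl v hvmem]
  · intro v c hc
    have h1 : (c : ℕ) < gcol A r v := hc
    rw [gcol_eq A r v] at h1
    have h2 := Nat.notMem_of_lt_sInf h1
    rw [Set.mem_setOf_eq, not_not] at h2
    obtain ⟨l, hl, hx⟩ := h2
    refine ⟨l, hl, fun x hxl => (hx x hxl).imp (fun h => ⟨h.1, ?_⟩) id⟩
    exact Fin.ext h.2

lemma col_le_cycleDegree [Fintype V] [DecidableEq V] {A : V → V → Prop} {k : ℕ}
    {φ : V → Fin k} (hg : IsGreedy A φ) (v : V) :
    (φ v : ℕ) ≤ cycleDegree A v := by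
  obtain ⟨hdic, o, ho, hgr⟩ := hg
  have hloopv : ¬ A v v := no_loop hdic v
  have hne : { n | ∃ S : Finset V, S.card = n ∧ v ∉ S ∧ HitsCyclesThrough A v S }.Nonempty := by
    refine ⟨(Finset.univ.erase v).card, Finset.univ.erase v, rfl,
      Finset.notMem_erase v _, ?_⟩
    intro l hl hvl
    have : ∃ u ∈ l, u ≠ v := by
      by_contra hall
      push_neg at hall
      have hlv : l = [v] := eq_singleton_of_forall hl.1 hl.2.1 hall
      subst hlv
      exact hloopv (hl.2.2.2 v (by simp) v (by simp))
    obtain ⟨u, hul, huv⟩ := this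
    exact ⟨u, hul, Finset.mem_erase.mpr ⟨huv, Finset.mem_univ u⟩⟩
  obtain ⟨S, hcard, hvS, hhits⟩ := Nat.sInf_mem hne
  have key : ∀ c : Fin k, c < φ v → ∃ u ∈ S, φ u = c := by
    intro c hc
    obtain ⟨l, hl, hx⟩ := hgr v c hc
    have hvl : v ∈ l := by
      by_contra hvl
      refine hdic c ⟨l, dicycle_and hl (fun x hx' => ?_)⟩
      exact ((hx x hx').resolve_right (by rintro rfl; exact hvl hx')).2
    obtain ⟨u, hul, huS⟩ := hhits l hl hvl
    have huv : u ≠ v := fun h => hvS (h ▸ huS)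
    exact ⟨u, huS, ((hx u hul).resolve_right huv).2⟩
  have H : ∀ c : Fin k, ∃ u, c < φ v → u ∈ S ∧ φ u = c := by
    intro c
    by_cases h : c < φ v
    · obtain ⟨u, h1, h2⟩ := key c h
      exact ⟨u, fun _ => ⟨h1, h2⟩⟩
    · exact ⟨v, fun hc => absurd hc h⟩
  choose f hf using H
  have hcount : (Finset.Iio (φ v)).card ≤ S.card :=
    Finset.card_le_card_of_injOn f
      (fun c hc => (hf c (Finset.mem_Iio.mp hc)).1)
      (fun c1 hc1 c2 hc2 heq => by
        have e1 := (hf c1 (Finset.mem_Iio.mp hc1)).2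
        have e2 := (hf c2 (Finset.mem_Iio.mp hc2)).2
        rw [← e1, ← e2, heq])
  rw [Fin.card_Iio] at hcount
  calc (φ v : ℕ) ≤ S.card := hcount
    _ = cycleDegree A v := hcard

theorem stmt10 [Fintype V] [DecidableEq V] (A : V → V → Prop) :
    dichromaticNumber A ≤ digrundy A ∧
      digrundy A ≤ (Finset.univ.sup fun v => cycleDegree A v) + 1 := by
  have hbdd : BddAbove { m | ∃ (k : ℕ) (φ : V → Fin k),
      IsGreedy A φ ∧ (Finset.univ.image φ).card = m } := by
    refine ⟨Fintype.card V, ?_⟩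
    rintro m ⟨k, φ, _, rfl⟩
    exact le_trans Finset.card_image_le (by simp)
  constructor
  · by_cases hl : ∃ w, A w w
    · obtain ⟨w, hw⟩ := hl
      have hzero : dichromaticNumber A = 0 := by
        unfold dichromaticNumber
        rw [Nat.sInf_eq_zero]
        right
        rw [Set.eq_empty_iff_forall_notMem]
        rintro k ⟨φ, hφ⟩
        exact no_loop hφ w hw
      exact hzero ▸ Nat.zero_le _
    · push_neg at hl
      obtain ⟨φ, hφ⟩ := exists_greedy hl
      obtain ⟨ψ, hψ⟩ := compress φ hφ.1
      calc dichromaticNumber A ≤ (Finset.univ.image φ).card :=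
            Nat.sInf_le ⟨ψ, hψ⟩
        _ ≤ digrundy A := le_csSup hbdd ⟨_, φ, hφ, rfl⟩
  · apply csSup_le'
    rintro m ⟨k, φ, hg, rfl⟩
    by_cases hE : (Finset.univ.image φ).Nonempty
    · set c0 := (Finset.univ.image φ).max' hE with hc0
      obtain ⟨v, -, hv⟩ := Finset.mem_image.mp ((Finset.univ.image φ).max'_mem hE)
      have h1 : (Finset.univ.image φ).card ≤ (c0 : ℕ) + 1 := by
        have hsub : (Finset.univ.image φ).image Fin.val ⊆ Finset.range ((c0 : ℕ) + 1) := by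
          intro x hx
          obtain ⟨c, hc, rfl⟩ := Finset.mem_image.mp hx
          exact Finset.mem_range.mpr (Nat.lt_succ_of_le (Finset.le_max' _ c hc))
        have := Finset.card_le_card hsub
        rwa [Finset.card_image_of_injective _ Fin.val_injective,
          Finset.card_range] at this
      have h2 : (c0 : ℕ) ≤ cycleDegree A v := by rw [hc0, ← hv]; exact col_le_cycleDegree hg v
      have h3 : cycleDegree A v ≤ Finset.univ.sup fun v => cycleDegree A v :=
        Finset.le_sup (Finset.mem_univ v)
      omega
    · rw [Finset.not_nonempty_iff_eq_empty] at hE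
      simp [hE]
end
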